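/- If X is a loopless digraph whose A-Laplacian L = Δ⁺ − A is normal, then the in-degree of every vertex equals its out-degree (i.e., for all u, (AᵀA)(u,u) = (AAᵀ)(u,u)). -/

import Mathlib

open Matrix Finset

def adjMat {V : Type*} [Fintype V] (R : V → V → Prop) [DecidableRel R] :
    Matrix V V ℝ := fun u v => if R u v then 1 else 0

def outDeg {V : Type*} [Fintype V] (R : V → V → Prop) [DecidableRel R] (u : V) : ℕ :=
  (Finset.univ.filter (fun v => R u v)).card

def lap {V : Type*} [Fintype V] [DecidableEq V] (R : V → V → Prop) [DecidableRel R] :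
    Matrix V V ℝ :=
  Matrix.diagonal (fun u => (outDeg R u : ℝ)) - adjMat R

theorem stmt2 {V : Type*} [Fintype V] [DecidableEq V] (R : V → V → Prop) [DecidableRel R]
    (hloopless : ∀ u, ¬ R u u)
    (hnormal : lap R * (lap R)ᵀ = (lap R)ᵀ * lap R) :
    ∀ u : V, ((adjMat R)ᵀ * adjMat R) u u = (adjMat R * (adjMat R)ᵀ) u u := by
  intro u
  have hA : ∀ v, adjMat R v v = 0 := by
    intro v; simp [adjMat, hloopless v]
  have h := congrFun (congrFun hnormal u) u
  simp only [mul_apply, transpose_apply, lap, Matrix.sub_apply, diagonal_apply] at h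
  have expand : ∀ f : V → ℝ, f u = 0 →
      ∑ v, ((if u = v then (outDeg R u : ℝ) else 0) - f v) *
           ((if u = v then (outDeg R u : ℝ) else 0) - f v)
        = (outDeg R u : ℝ)^2 + ∑ v, f v * f v := by
    intro f hf
    have : ∀ v, ((if u = v then (outDeg R u : ℝ) else 0) - f v) *
           ((if u = v then (outDeg R u : ℝ) else 0) - f v)
        = (if u = v then (outDeg R u : ℝ)^2 - 2 * (outDeg R u : ℝ) * f v else 0)
          + f v * f v := by
      intro v
      by_cases hv : u = v <;> simp [hv] <;> ring
    rw [Finset.sum_congr rfl (fun v _ => this v), Finset.sum_add_distrib,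
      Finset.sum_ite_eq Finset.univ u, if_pos (Finset.mem_univ u), hf]
    ring
  have expand2 : ∀ f : V → ℝ, f u = 0 →
      ∑ x, ((if x = u then (outDeg R x : ℝ) else 0) - f x) *
           ((if x = u then (outDeg R x : ℝ) else 0) - f x)
        = (outDeg R u : ℝ)^2 + ∑ x, f x * f x := by
    intro f hf
    have : ∀ x, ((if x = u then (outDeg R x : ℝ) else 0) - f x) *
           ((if x = u then (outDeg R x : ℝ) else 0) - f x)
        = (if x = u then (outDeg R u : ℝ)^2 - 2 * (outDeg R u : ℝ) * f x else 0)
          + f x * f x := by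
      intro x
      by_cases hv : x = u
      · subst hv; simp; ring
      · simp [hv]
    rw [Finset.sum_congr rfl (fun v _ => this v), Finset.sum_add_distrib,
      Finset.sum_ite_eq' Finset.univ u, if_pos (Finset.mem_univ u), hf]
    ring
  rw [expand (fun v => adjMat R u v) (hA u),
      expand2 (fun v => adjMat R v u) (hA u)] at h
  simp only [mul_apply, transpose_apply]
  linarith [h]
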